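/- Let G be a graph and v a vertex of G of degree d ≤ 4. Then Γ(G−v) ≤ Γ(G), where Γ(H) = |V(H)|/12 + Φ(H)/36 + tc(H)/18, Φ(H) = Σ_{w∈V(H)}(deg_H(w) − 5), and tc(H) is the number of tree components of H. -/

import Mathlib

/-- `Φ(G) = Σ_{v ∈ V} (deg v - 5)`. -/
noncomputable def Phi {V : Type*} [Fintype V] (G : SimpleGraph V) : ℤ :=
  ∑ v : V, ((Nat.card (G.neighborSet v) : ℤ) - 5)

/-- The number of tree components of `G`. -/
noncomputable def treeComponents {V : Type*} (G : SimpleGraph V) : ℕ :=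
  Nat.card {c : G.ConnectedComponent // (G.induce c.supp).IsTree}

/-- `Γ(G) = |V|/12 + Φ(G)/36 + tc(G)/18`. -/
noncomputable def Gamma {V : Type*} [Fintype V] (G : SimpleGraph V) : ℝ :=
  (Fintype.card V : ℝ) / 12 + (Phi G : ℝ) / 36 + (treeComponents G : ℝ) / 18

section GammaHelpers
open SimpleGraph
variable {V : Type*}



lemma walk_lift {G : SimpleGraph V} {t : Set V} :
    ∀ {x y : V} (p : G.Walk x y) (hp : ∀ z ∈ p.support, z ∈ t),
    ∃ q : (G.induce t).Walk ⟨x, hp x p.start_mem_support⟩ ⟨y, hp y p.end_mem_support⟩,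
      q.map (Embedding.induce t).toHom = p := by
  intro x y p
  induction p with
  | nil => intro hp; exact ⟨Walk.nil, rfl⟩
  | cons h p ih =>
      intro hp
      obtain ⟨q, hq⟩ := ih (fun z hz => hp z (by simp [hz]))
      refine ⟨Walk.cons (by simpa using h) q, ?_⟩
      simp [hq]

lemma reach_lift {G : SimpleGraph V} {t : Set V} {x y : V} (p : G.Walk x y)
    (hp : ∀ z ∈ p.support, z ∈ t) (hx : x ∈ t) (hy : y ∈ t) :
    (G.induce t).Reachable ⟨x, hx⟩ ⟨y, hy⟩ := by
  obtain ⟨q, -⟩ := walk_lift p hp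
  exact ⟨q⟩

lemma not_isAcyclic_of_cycle {G : SimpleGraph V} {t : Set V} {x : V} (p : G.Walk x x)
    (hc : p.IsCycle) (hp : ∀ z ∈ p.support, z ∈ t) : ¬ (G.induce t).IsAcyclic := by
  intro ha
  obtain ⟨q, hq⟩ := walk_lift p hp
  have h2 : (q.map (Embedding.induce (G := G) t).toHom).IsCycle := by rw [hq]; exact hc
  exact ha q ((Walk.map_isCycle_iff_of_injective
    (Embedding.induce (G := G) t).injective).mp h2)

lemma isTree_map {W : Type*} {G : SimpleGraph V} {H : SimpleGraph W} (e : G ≃g H)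
    (h : G.IsTree) : H.IsTree := by
  rw [isTree_iff] at h ⊢
  refine ⟨e.connected_iff.mp h.1, ?_⟩
  intro x q hq
  exact h.2 (q.map e.symm.toHom) (hq.map e.symm.injective)

noncomputable def induceInduceIso (G : SimpleGraph V) (t : Set V) (u : Set t) :
    (G.induce t).induce u ≃g G.induce ((↑) '' u : Set V) where
  toEquiv := Equiv.Set.image _ u Subtype.val_injective
  map_rel_iff' := by
    intro a b
    simp [Equiv.Set.image, Equiv.Set.imageOfInjOn]


lemma connected_induce_supp [DecidableEq V] {G : SimpleGraph V} (D : G.ConnectedComponent) :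
    (G.induce D.supp).Connected := by
  obtain ⟨x, hx⟩ := D.exists_rep
  rw [connected_iff]
  refine ⟨?_, ⟨⟨x, by exact hx⟩⟩⟩
  rintro ⟨a, ha⟩ ⟨b, hb⟩
  rw [ConnectedComponent.mem_supp_iff] at ha hb
  have hr : G.Reachable a b := ConnectedComponent.exact (ha.trans hb.symm)
  obtain ⟨p⟩ := hr
  refine reach_lift p (fun z hz => ?_) _ _
  · show z ∈ D.supp
    rw [ConnectedComponent.mem_supp_iff, ← ha]
    exact (ConnectedComponent.sound (p.takeUntil z hz).reachable).symm

lemma exists_nbr_walk [DecidableEq V] {G : SimpleGraph V} {x v : V} (hxv : x ≠ v) (hr : G.Reachable x v) :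
    ∃ (w : V) (r : G.Walk x w), G.Adj v w ∧ v ∉ r.support := by
  obtain ⟨q0⟩ := hr
  obtain ⟨q, hq⟩ := q0.toPath
  obtain ⟨w, h, r0, hrev⟩ := Walk.exists_eq_cons_of_ne (Ne.symm hxv) q.reverse
  have hp : (Walk.cons h r0).IsPath := hrev ▸ hq.reverse
  rw [Walk.cons_isPath_iff] at hp
  exact ⟨w, r0.reverse, h, by simpa [Walk.support_reverse] using hp.2⟩

lemma two_nbrs_of_cycle {G : SimpleGraph V} {v : V} (p : G.Walk v v) (hc : p.IsCycle) :
    ∃ (w1 w2 : V) (r : G.Walk w1 w2), G.Adj v w1 ∧ G.Adj v w2 ∧ w1 ≠ w2 ∧ v ∉ r.support := by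
  cases p with
  | nil => exact absurd rfl hc.ne_nil
  | cons h1 e1 =>
    rename_i w1
    rw [Walk.cons_isCycle_iff] at hc
    obtain ⟨w2, h2, e2, hrev⟩ := Walk.exists_eq_cons_of_ne (h1.ne) e1.reverse
    have hp : (Walk.cons h2 e2).IsPath := hrev ▸ hc.1.reverse
    rw [Walk.cons_isPath_iff] at hp
    have hw12 : w1 ≠ w2 := by
      rintro rfl
      apply hc.2
      have : s(v, w1) ∈ e1.reverse.edges := by rw [hrev]; simp
      simpa [Walk.edges_reverse] using this
    exact ⟨w1, w2, e2.reverse, h1, h2, hw12, by simpa [Walk.support_reverse] using hp.2⟩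
section H3
open SimpleGraph
variable {V : Type*} [DecidableEq V] {G : SimpleGraph V} {v : V}

lemma supp_image (C : (G.induce {w : V | w ≠ v}).ConnectedComponent)
    (hC : ∀ w : {w : V | w ≠ v}, w ∈ C.supp → ¬ G.Adj v ↑w)
    {x : {w : V | w ≠ v}} (hx : x ∈ C.supp) :
    (G.connectedComponentMk (x : V)).supp = Subtype.val '' C.supp := by
  ext y
  rw [ConnectedComponent.mem_supp_iff]
  constructor
  · intro hy
    have hr : G.Reachable (x : V) y := ConnectedComponent.exact hy.symm
    obtain ⟨p0⟩ := hr
    obtain ⟨q, hq⟩ := p0.toPath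
    by_cases hv : v ∈ q.support
    · exfalso
      have hxv : (x : V) ≠ v := x.2
      obtain ⟨w, r, hadj, hvr⟩ := exists_nbr_walk hxv ⟨q.takeUntil v hv⟩
      have hw : w ≠ v := hadj.ne'
      have hreach := reach_lift (t := {w : V | w ≠ v}) r
        (fun z hz => fun h => hvr (h ▸ hz)) x.2 hw
      have : (⟨w, hw⟩ : {w : V | w ≠ v}) ∈ C.supp := by
        rw [ConnectedComponent.mem_supp_iff, ← ConnectedComponent.sound hreach]
        simpa using hx
      exact hC _ this hadj
    · have hreach := reach_lift (t := {w : V | w ≠ v}) q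
        (fun z hz => fun h => hv (h ▸ hz)) x.2 (fun h => hv (h ▸ q.end_mem_support))
      refine ⟨⟨y, fun h => hv (h ▸ q.end_mem_support)⟩, ?_, rfl⟩
      rw [ConnectedComponent.mem_supp_iff, ← ConnectedComponent.sound hreach]
      simpa using hx
  · rintro ⟨z, hz, rfl⟩
    rw [ConnectedComponent.mem_supp_iff] at hz hx
    have hr : (G.induce {w : V | w ≠ v}).Reachable x z := ConnectedComponent.exact (hx.trans hz.symm)
    exact ConnectedComponent.sound (hr.map (Embedding.induce _).toHom).symm

lemma key_nontree (hnt : ¬ (G.induce (G.connectedComponentMk v).supp).IsTree) :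
    ∃ w : {w : V | w ≠ v}, G.Adj v ↑w ∧
      (¬ ((G.induce {w : V | w ≠ v}).induce
          ((G.induce {w : V | w ≠ v}).connectedComponentMk w).supp).IsTree
       ∨ ∃ w2 : {w : V | w ≠ v}, G.Adj v ↑w2 ∧ w2 ≠ w ∧
          (G.induce {w : V | w ≠ v}).connectedComponentMk w2
            = (G.induce {w : V | w ≠ v}).connectedComponentMk w) := by
  set t : Set V := {w : V | w ≠ v} with ht
  set Dv := G.connectedComponentMk v with hDv
  rw [isTree_iff] at hnt
  push_neg at hnt
  have hacyc := hnt (connected_induce_supp _)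
  unfold SimpleGraph.IsAcyclic at hacyc
  push_neg at hacyc
  obtain ⟨a, c0, hc0⟩ := hacyc
  have hc1 : (c0.map (Embedding.induce (G := G) Dv.supp).toHom).IsCycle :=
    hc0.map (Embedding.induce (G := G) Dv.supp).injective
  set c1 := c0.map (Embedding.induce (G := G) Dv.supp).toHom with hc1def
  by_cases hv : v ∈ c1.support
  · obtain ⟨w1, w2, r, h1, h2, hne, hvr⟩ := two_nbrs_of_cycle (c1.rotate v hv) (hc1.rotate hv)
    have hw1 : w1 ≠ v := h1.ne'
    have hw2 : w2 ≠ v := h2.ne'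
    have hreach := reach_lift (t := t) r (fun z hz h => hvr (h ▸ hz)) hw1 hw2
    exact ⟨⟨w1, hw1⟩, h1, Or.inr ⟨⟨w2, hw2⟩, h2,
      fun h => hne (congrArg Subtype.val h).symm, (ConnectedComponent.sound hreach).symm⟩⟩
  · have has : (a : V) ∈ c1.support := c1.start_mem_support
    have hav : (a : V) ≠ v := fun h => hv (h ▸ has)
    have hrav : G.Reachable (a : V) v := ConnectedComponent.exact a.2
    obtain ⟨w, r, hadj, hvr⟩ := exists_nbr_walk hav hrav
    have hw : w ≠ v := hadj.ne'
    have hreach := reach_lift (t := t) r (fun z hz h => hvr (h ▸ hz)) hav hw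
    refine ⟨⟨w, hw⟩, hadj, Or.inl ?_⟩
    intro htree
    set C0 := (G.induce t).connectedComponentMk ⟨w, hw⟩ with hC0
    have htree' := isTree_map (induceInduceIso G t C0.supp) htree
    refine not_isAcyclic_of_cycle c1 hc1 (fun z hz => ?_) ((isTree_iff _).mp htree').2
    have hzv : z ≠ v := fun h => hv (h ▸ hz)
    have hz2 := reach_lift (t := t) (c1.takeUntil z hz)
      (fun u hu h => hv (h ▸ (c1.support_takeUntil_subset hz hu))) hav hzv
    refine ⟨⟨z, hzv⟩, ?_, rfl⟩
    rw [ConnectedComponent.mem_supp_iff, hC0]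
    exact ((ConnectedComponent.sound hz2).symm.trans (ConnectedComponent.sound hreach))

end H3

lemma card_plus_one_le {α β : Type*} [Finite α] [Finite β] (f : α → β)
    (hinj : Function.Injective f) (b : β) (hb : b ∉ Set.range f) :
    Nat.card α + 1 ≤ Nat.card β := by
  letI := Fintype.ofFinite α
  letI := Fintype.ofFinite β
  rw [Nat.card_eq_fintype_card, Nat.card_eq_fintype_card]
  exact Fintype.card_lt_of_injective_of_notMem f hinj hb

lemma tc_bound {V : Type*} [Fintype V] [DecidableEq V] (G : SimpleGraph V) (v : V) :
    treeComponents (G.induce {w : V | w ≠ v}) + 1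
      ≤ treeComponents G + Nat.card (G.neighborSet v) := by
  classical
  set t : Set V := {w : V | w ≠ v} with ht
  set G' := G.induce t with hG'
  let TC' := {c : G'.ConnectedComponent // (G'.induce c.supp).IsTree}
  let TC := {c : G.ConnectedComponent // (G.induce c.supp).IsTree}
  let N := ↥(G.neighborSet v)
  haveI : Finite G.ConnectedComponent := Quot.finite _
  haveI : Finite G'.ConnectedComponent := Quot.finite _
  let Touch : G'.ConnectedComponent → Prop := fun C => ∃ w : ↥t, w ∈ C.supp ∧ G.Adj v ↑w
  have hA : ∀ (C : TC'), ¬ Touch C.1 →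
      ∃ D : G.ConnectedComponent, (G.induce D.supp).IsTree ∧
        D.supp = Subtype.val '' C.1.supp := by
    intro C hT
    obtain ⟨x, hx⟩ := C.1.exists_rep
    have hx' : x ∈ C.1.supp := hx
    have hsupp := supp_image (v := v) C.1 (fun w hw hadj => hT ⟨w, hw, hadj⟩) hx'
    refine ⟨G.connectedComponentMk ↑x, ?_, hsupp⟩
    rw [hsupp]
    exact isTree_map (induceInduceIso G t C.1.supp) C.2
  let F : TC' → TC ⊕ N := fun C =>
    if h : Touch C.1 then Sum.inr ⟨(h.choose : V), h.choose_spec.2⟩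
    else Sum.inl ⟨(hA C h).choose, (hA C h).choose_spec.1⟩
  have hF_pos : ∀ (C : TC') (h : Touch C.1),
      F C = Sum.inr ⟨(h.choose : V), h.choose_spec.2⟩ := fun C h => dif_pos h
  have hF_neg : ∀ (C : TC') (h : ¬ Touch C.1),
      F C = Sum.inl ⟨(hA C h).choose, (hA C h).choose_spec.1⟩ := fun C h => dif_neg h
  -- injectivity
  have hinj : Function.Injective F := by
    intro C1 C2 heq
    by_cases h1 : Touch C1.1 <;> by_cases h2 : Touch C2.1
    · rw [hF_pos C1 h1, hF_pos C2 h2] at heq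
      have heq' := Sum.inr.inj heq
      have hval : (h1.choose : V) = (h2.choose : V) := by simpa using Subtype.ext_iff.mp heq'
      have hc : h1.choose = h2.choose := Subtype.val_injective hval
      have m1 := h1.choose_spec.1
      have m2 := h2.choose_spec.1
      rw [hc] at m1
      rw [SimpleGraph.ConnectedComponent.mem_supp_iff] at m1 m2
      exact Subtype.ext (m1.symm.trans m2)
    · rw [hF_pos C1 h1, hF_neg C2 h2] at heq; exact absurd heq (by simp)
    · rw [hF_neg C1 h1, hF_pos C2 h2] at heq; exact absurd heq (by simp)
    · rw [hF_neg C1 h1, hF_neg C2 h2] at heq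
      have heq' := Sum.inl.inj heq
      have hD : (hA C1 h1).choose = (hA C2 h2).choose := by simpa using Subtype.ext_iff.mp heq'
      have e1 := (hA C1 h1).choose_spec.2
      have e2 := (hA C2 h2).choose_spec.2
      rw [hD, e2] at e1
      have : C2.1.supp = C1.1.supp :=
        Set.image_injective.mpr Subtype.val_injective e1
      exact Subtype.ext (SimpleGraph.ConnectedComponent.supp_injective this.symm)
  -- an element not in the range
  have hmiss : ∃ b : TC ⊕ N, b ∉ Set.range F := by
    have hinr : ∀ (C : TC') (u : ↥t) (hu : G.Adj v ↑u),
        F C = Sum.inr ⟨(u : V), hu⟩ → C.1 = G'.connectedComponentMk u := by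
      intro C u hu hFC
      by_cases h : Touch C.1
      · rw [hF_pos C h] at hFC
        have hFC' := Sum.inr.inj hFC
        have hval : (h.choose : V) = ↑u := by simpa using Subtype.ext_iff.mp hFC'
        have hcu : h.choose = u := Subtype.val_injective hval
        have hm := h.choose_spec.1
        rw [hcu, SimpleGraph.ConnectedComponent.mem_supp_iff] at hm
        exact hm.symm
      · rw [hF_neg C h] at hFC; exact absurd hFC (by simp)
    by_cases htv : (G.induce (G.connectedComponentMk v).supp).IsTree
    · refine ⟨Sum.inl ⟨G.connectedComponentMk v, htv⟩, ?_⟩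
      rintro ⟨C, hC⟩
      by_cases h : Touch C.1
      · rw [hF_pos C h] at hC; exact absurd hC (by simp)
      · rw [hF_neg C h] at hC
        have hC' := Sum.inl.inj hC
        have hD : (hA C h).choose = G.connectedComponentMk v := by simpa using Subtype.ext_iff.mp hC'
        have e := (hA C h).choose_spec.2
        rw [hD] at e
        have hv : v ∈ (G.connectedComponentMk v).supp := rfl
        rw [e] at hv
        obtain ⟨z, -, hz⟩ := hv
        exact z.2 hz
    · obtain ⟨w, hadj, hkey⟩ := key_nontree (v := v) htv
      rcases hkey with hnotree | ⟨w2, hadj2, hne, hcc⟩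
      · refine ⟨Sum.inr ⟨(w : V), hadj⟩, ?_⟩
        rintro ⟨C, hC⟩
        have hPC := hinr C w hadj hC
        exact hnotree (hPC ▸ C.2)
      · set C0 := G'.connectedComponentMk w with hC0
        by_cases hC0t : (G'.induce C0.supp).IsTree
        · have hTouch : Touch C0 := ⟨w, rfl, hadj⟩
          by_cases hch : hTouch.choose = w
          · refine ⟨Sum.inr ⟨(w2 : V), hadj2⟩, ?_⟩
            rintro ⟨C, hC⟩
            have hPC := (hinr C w2 hadj2 hC).trans hcc
            have hCeq : C = ⟨C0, hC0t⟩ := Subtype.ext hPC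
            rw [hCeq, hF_pos _ hTouch] at hC
            have hC' := Sum.inr.inj hC
            have : (hTouch.choose : V) = ↑w2 := by simpa using Subtype.ext_iff.mp hC'
            exact hne (Subtype.val_injective ((congrArg Subtype.val hch).symm.trans this)).symm
          · refine ⟨Sum.inr ⟨(w : V), hadj⟩, ?_⟩
            rintro ⟨C, hC⟩
            have hPC := hinr C w hadj hC
            have hCeq : C = ⟨C0, hC0t⟩ := Subtype.ext hPC
            rw [hCeq, hF_pos _ hTouch] at hC
            have hC' := Sum.inr.inj hC
            have : (hTouch.choose : V) = ↑w := by simpa using Subtype.ext_iff.mp hC'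
            exact hch (Subtype.val_injective this)
        · refine ⟨Sum.inr ⟨(w : V), hadj⟩, ?_⟩
          rintro ⟨C, hC⟩
          have hPC := hinr C w hadj hC
          exact hC0t ((hPC.trans hC0.symm) ▸ C.2)
  obtain ⟨b, hb⟩ := hmiss
  have hcard := card_plus_one_le F hinj b hb
  rw [Nat.card_sum] at hcard
  exact hcard

section PhiSec
variable {V : Type*} [Fintype V] [DecidableEq V]

open scoped Classical in
lemma nbr_card (G : SimpleGraph V) (v : V) (w : {u : V | u ≠ v}) :
    (Nat.card ((G.induce {u : V | u ≠ v}).neighborSet w) : ℤ)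
      = (Nat.card (G.neighborSet ↑w) : ℤ) - (if G.Adj ↑w v then 1 else 0) := by
  classical
  have himg : Subtype.val '' ((G.induce {u : V | u ≠ v}).neighborSet w)
      = G.neighborSet (↑w : V) \ {v} := by
    ext u
    constructor
    · rintro ⟨z, hz, rfl⟩
      exact ⟨by simpa using hz, z.2⟩
    · rintro ⟨hu, huv⟩
      exact ⟨⟨u, huv⟩, by simpa using hu, rfl⟩
  have h1 : Nat.card ((G.induce {u : V | u ≠ v}).neighborSet w)
      = (G.neighborSet (↑w : V) \ {v}).ncard := by
    rw [← himg, Nat.card_coe_set_eq,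
      Set.ncard_image_of_injective _ Subtype.val_injective]
  have h2 : Nat.card (G.neighborSet (↑w : V)) = (G.neighborSet (↑w : V)).ncard :=
    Nat.card_coe_set_eq _
  rw [h1, h2]
  by_cases hadj : G.Adj ↑w v
  · rw [if_pos hadj]
    have hv : v ∈ G.neighborSet (↑w : V) := hadj
    rw [Set.ncard_diff_singleton_of_mem hv]
    have hpos : 1 ≤ (G.neighborSet (↑w : V)).ncard :=
      (Set.ncard_pos (Set.toFinite _)).mpr ⟨v, hv⟩
    push_cast [Nat.cast_sub hpos]
    ring
  · rw [if_neg hadj, Set.diff_singleton_eq_self (s := G.neighborSet (↑w : V)) (fun h => hadj h), sub_zero]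

lemma phi_eq (G : SimpleGraph V) (v : V) :
    Phi (G.induce {w : V | w ≠ v}) = Phi G + 5 - 2 * (Nat.card (G.neighborSet v) : ℤ) := by
  classical
  rw [Phi]
  set f : V → ℤ := fun x => (Nat.card (G.neighborSet x) : ℤ) - 5 - (if G.Adj x v then 1 else 0) with hf
  have hterm : ∀ w : {u : V | u ≠ v},
      ((Nat.card ((G.induce {u : V | u ≠ v}).neighborSet w) : ℤ) - 5) = f ↑w := by
    intro w
    rw [hf]
    simp only
    rw [nbr_card G v w]
    ring
  rw [Finset.sum_congr rfl (fun w _ => hterm w), Finset.sum_set_coe]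
  have hfin : {u : V | u ≠ v}.toFinset = Finset.univ.erase v := by
    rw [Set.toFinset_setOf]
    exact Finset.filter_ne' Finset.univ v
  rw [hfin]
  rw [Finset.sum_sub_distrib, Finset.sum_erase_eq_sub (Finset.mem_univ v)]
  have hite : ∑ x ∈ Finset.univ.erase v, (if G.Adj x v then (1:ℤ) else 0)
      = (Nat.card (G.neighborSet v) : ℤ) := by
    have h0 : (if G.Adj v v then (1:ℤ) else 0) = 0 := if_neg (G.irrefl)
    rw [Finset.sum_erase (f := fun x => if G.Adj x v then (1:ℤ) else 0) _ h0, Finset.sum_boole]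
    have h3 : Nat.card (G.neighborSet v)
        = (Finset.univ.filter (fun x => G.Adj x v)).card := by
      rw [Nat.card_coe_set_eq, Set.ncard_eq_toFinset_card']
      congr 1
      ext x
      simp [SimpleGraph.adj_comm]
    rw [h3]
  rw [hite]
  simp only [Phi]
  ring
end PhiSec

end GammaHelpers

/-- Deleting a vertex of degree at most 4 does not increase `Γ`. -/
theorem gamma_deleteVertex_le {V : Type*} [Fintype V] [DecidableEq V]
    (G : SimpleGraph V) (v : V) (hdeg : Nat.card (G.neighborSet v) ≤ 4) :
    Gamma (G.induce {w : V | w ≠ v}) ≤ Gamma G := by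
  classical
  have htc := tc_bound G v
  have hphi := phi_eq G v
  have hv1 : 1 ≤ Fintype.card V := Fintype.card_pos_iff.mpr ⟨v⟩
  have hcard : Fintype.card ↥{w : V | w ≠ v} = Fintype.card V - 1 := by
    rw [Fintype.card_congr (Equiv.subtypeEquivRight (fun _ => Iff.rfl) :
      ↥{w : V | w ≠ v} ≃ {w : V // ¬ w = v})]
    rw [Fintype.card_subtype_compl, Fintype.card_subtype_eq]
  have htcR : (treeComponents (G.induce {w : V | w ≠ v}) : ℝ) + 1
      ≤ (treeComponents G : ℝ) + (Nat.card (G.neighborSet v) : ℝ) := by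
    exact_mod_cast htc
  rw [Gamma, Gamma, hphi, hcard, Nat.cast_sub hv1]
  push_cast
  linarith
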